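/- arXiv:1612.02906 — 4 statements merged into one kernel-verified Lean document; each statement's English description precedes it below -/
import Mathlib

section
/- Let p be a prime, n a positive integer, F = GF(p^n), and let q be a positive integer with gcd(q, p^n − 1) = 1. If (α + β)^q = α^q + β^q for all α, β ∈ F, then q is congruent to a power of p modulo p^n − 1, i.e., q ≡ p^l (mod p^n − 1) for some 0 ≤ l < n. -/
open Polynomial

theorem stmt_1 (p n : ℕ) (hp : p.Prime) (hn : 0 < n)
    (F : Type*) [Field F] [Fintype F] (hF : Fintype.card F = p ^ n)
    (q : ℕ) (hq : 0 < q) (hcop : Nat.Coprime q (p ^ n - 1))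
    (hadd : ∀ α β : F, (α + β) ^ q = α ^ q + β ^ q) :
    ∃ l < n, q ≡ p ^ l [MOD p ^ n - 1] := by
  set m := p ^ n - 1 with hm
  -- trivial case m = 1
  have hpn1 : 1 < p ^ n := Nat.one_lt_pow hn.ne' hp.one_lt
  rcases Nat.lt_or_ge m 2 with hm1 | hm2
  · have : m = 1 := by omega
    rw [this]
    exact ⟨0, hn, Nat.modEq_one⟩
  -- characteristic of F is p
  obtain ⟨c, hc⟩ := CharP.exists F
  have hcF : CharP F c := hc
  obtain ⟨k, hck, hcard⟩ := FiniteField.card F c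
  have hcp : c = p := by
    have h1 : c ∣ p ^ n := by
      rw [← hF, hcard]
      exact dvd_pow_self c k.2.ne'
    rcases hck.dvd_of_dvd_pow h1 with h2
    exact (Nat.prime_dvd_prime_iff_eq hck hp).mp h2
  rw [hcp] at hcF
  haveI : CharP F p := hcF
  haveI : Fact p.Prime := ⟨hp⟩
  -- reduce q mod m
  set r := q % m with hr
  have hrm : r < m := Nat.mod_lt _ (by omega)
  have hr0 : r ≠ 0 := by
    intro h
    have : m ∣ q := Nat.dvd_of_mod_eq_zero h
    have : m ∣ Nat.gcd q m := Nat.dvd_gcd this dvd_rfl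
    rw [hcop] at this
    have := Nat.le_of_dvd one_pos this
    omega
  -- x ^ q = x ^ r for all x
  have hqr : ∀ x : F, x ^ q = x ^ r := by
    intro x
    rcases eq_or_ne x 0 with rfl | hx
    · rw [zero_pow hq.ne', zero_pow hr0]
    · conv_lhs => rw [← Nat.div_add_mod q m]
      rw [pow_add, pow_mul, ← hr]
      have : x ^ m = 1 := by
        rw [hm, ← hF]
        exact FiniteField.pow_card_sub_one_eq_one x hx
      rw [this, one_pow, one_mul]
  -- functional identity for r
  have hfun : ∀ x : F, (x + 1) ^ r = x ^ r + 1 := by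
    intro x
    have := hadd x 1
    rw [hqr, hqr, one_pow] at this
    exact this
  -- polynomial identity
  have hpoly : ((X + 1 : F[X]) ^ r) = X ^ r + 1 := by
    have hz : ((X + 1 : F[X]) ^ r - (X ^ r + 1)) = 0 := by
      apply Polynomial.eq_zero_of_natDegree_lt_card_of_eval_eq_zero _ Function.injective_id
      · intro x
        simp [hfun x]
      · have hdeg : ((X + 1 : F[X]) ^ r - (X ^ r + 1)).natDegree ≤ r := by
          apply le_trans (Polynomial.natDegree_sub_le _ _)
          apply max_le
          · apply le_trans (Polynomial.natDegree_pow_le)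
            have : (X + 1 : F[X]).natDegree ≤ 1 :=
              le_trans (Polynomial.natDegree_add_le _ _) (by simp)
            nlinarith
          · apply le_trans (Polynomial.natDegree_add_le _ _)
            simp [Polynomial.natDegree_X_pow]
        have : r < Fintype.card F := by rw [hF]; omega
        omega
    have := sub_eq_zero.mp hz
    exact this
  -- r is a power of p
  set l := r.factorization p with hl
  set s := r / p ^ l with hs
  have hrs : p ^ l * s = r := Nat.ordProj_mul_ordCompl_eq_self r p
  have hns : ¬ p ∣ s := Nat.not_dvd_ordCompl hp hr0
  have hs1 : s = 1 := by
    by_contra hsne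
    have hs0 : s ≠ 0 := by
      intro h; rw [h, mul_zero] at hrs; exact hr0 hrs.symm
    have hs2 : 2 ≤ s := by
      rcases Nat.lt_or_ge s 2 with h | h
      · interval_cases s
        · exact absurd rfl hs0
        · exact absurd rfl hsne
      · exact h
    have hpl0 : 0 < p ^ l := pow_pos hp.pos l
    -- (X^(p^l)+1)^s = X^r + 1
    have h2 : ((X ^ (p ^ l) + 1 : F[X])) ^ s = X ^ r + 1 := by
      rw [← hpoly, ← hrs, pow_mul]
      rw [add_pow_char_pow]
      rw [one_pow]
    have h3 : ((X ^ (p ^ l) + 1 : F[X])) ^ s = Polynomial.expand F (p ^ l) ((X + 1) ^ s) := by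
      rw [map_pow, map_add, Polynomial.expand_X, map_one]
    -- compare coefficient at p ^ l
    have h4 := congrArg (fun f : F[X] => f.coeff (p ^ l)) (h3.symm.trans h2)
    rw [Polynomial.coeff_expand hpl0, if_pos (dvd_refl _), Nat.div_self hpl0,
      Polynomial.coeff_X_add_one_pow, Nat.choose_one_right] at h4
    rw [Polynomial.coeff_add, Polynomial.coeff_X_pow, Polynomial.coeff_one] at h4
    have hne1 : p ^ l ≠ r := by
      intro h
      rw [← h] at hrs
      exact hsne (Nat.eq_of_mul_eq_mul_left hpl0 (by rw [hrs, mul_one]))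
    rw [if_neg hne1, if_neg hpl0.ne'] at h4
    rw [add_zero] at h4
    exact hns ((CharP.cast_eq_zero_iff F p s).mp h4)
  have hrpl : r = p ^ l := by rw [← hrs, hs1, mul_one]
  have hln : l < n := by
    have : p ^ l < p ^ n := by rw [← hrpl, hm] at *; omega
    exact (Nat.pow_lt_pow_iff_right hp.one_lt).mp this
  refine ⟨l, hln, ?_⟩
  calc q ≡ r [MOD m] := (Nat.mod_modEq q m).symm
    _ = p ^ l := hrpl
end

section
/- Let p be a prime, n a positive integer, F = GF(p^n), and let q_i, q_j be positive integers coprime to p^n − 1. Then (α^{q_i} + β^{q_i})^{q_j} = (α^{q_j} + β^{q_j})^{q_i} holds for all α, β ∈ F if and only if q_i ≡ q_j · p^l (mod p^n − 1) for some 0 ≤ l < n. -/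
lemma powA {F : Type*} [Field F] [Fintype F] {p n : ℕ} (hF : Fintype.card F = p ^ n)
    {a b : ℕ} (ha : 0 < a) (hb : 0 < b) (hab : a ≡ b [MOD p ^ n - 1]) (x : F) :
    x ^ a = x ^ b := by
  rcases eq_or_ne x 0 with rfl | hx
  · rw [zero_pow ha.ne', zero_pow hb.ne']
  · have h1 : x ^ (p ^ n - 1) = 1 := by
      rw [← hF]; exact FiniteField.pow_card_sub_one_eq_one x hx
    wlog hle : a ≤ b generalizing a b
    · exact (this hb ha hab.symm (le_of_not_ge hle)).symm
    · obtain ⟨t, ht⟩ : ∃ t, b = a + (p ^ n - 1) * t := by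
        have := (Nat.modEq_iff_dvd' hle).mp hab
        obtain ⟨t, ht⟩ := this
        exact ⟨t, by omega⟩
      rw [ht, pow_add, pow_mul, h1, one_pow, mul_one]

lemma lucasB (p : ℕ) [Fact p.Prime] (l m : ℕ) :
    ((p ^ l * m).choose (p ^ l) : ZMod p) = (m : ZMod p) := by
  induction l with
  | zero => simp [Nat.choose_one_right]
  | succ l ih =>
    have hp1 : 1 < p := (Fact.out : p.Prime).one_lt
    have h := (Choose.choose_modEq_choose_mod_mul_choose_div
      (p := p) (n := p ^ (l+1) * m) (k := p ^ (l+1)))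
    have hmodn : (p ^ (l+1) * m) % p = 0 := by
      simp [Nat.mul_mod, Nat.pow_mod, Nat.mod_self, pow_succ]
    have hmodk : (p ^ (l+1)) % p = 0 := by
      simp [Nat.pow_mod, Nat.mod_self, pow_succ]
    have hdivn : (p ^ (l+1) * m) / p = p ^ l * m := by
      rw [pow_succ, mul_comm (p ^ l) p, mul_assoc, Nat.mul_div_cancel_left _ (by omega)]
    have hdivk : (p ^ (l+1)) / p = p ^ l := by
      rw [pow_succ, Nat.mul_div_cancel _ (by omega)]
    rw [hmodn, hmodk, hdivn, hdivk] at h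
    have h2 := (ZMod.intCast_eq_intCast_iff _ _ _).mpr h
    push_cast at h2
    simpa [ih] using h2

lemma addC {F : Type*} [Field F] [Fintype F] {p n k : ℕ} (hp : p.Prime)
    (hF : Fintype.card F = p ^ n) [CharP F p] (hk : 0 < k) (hklt : k < p ^ n)
    (hadd : ∀ x y : F, (x + y) ^ k = x ^ k + y ^ k) :
    ∃ l, k = p ^ l := by
  haveI : Fact p.Prime := ⟨hp⟩
  -- binomial coefficients vanish
  have hbin : ∀ i, 0 < i → i < k → (p : ℕ) ∣ k.choose i := by
    intro i hi0 hik
    set P : Polynomial F := (Polynomial.X + 1) ^ k - (Polynomial.X ^ k + 1) with hP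
    have hPz : P = 0 := by
      apply Polynomial.eq_zero_of_forall_eval_zero_of_natDegree_lt_card
      · intro r
        simp only [hP, Polynomial.eval_sub, Polynomial.eval_add, Polynomial.eval_pow,
          Polynomial.eval_one, Polynomial.eval_X]
        have := hadd r 1
        rw [one_pow] at this
        rw [this]; ring
      · have h1 : P.natDegree ≤ k := by
        -- bound degree
          refine le_trans (Polynomial.natDegree_sub_le _ _) ?_
          simp only [max_le_iff]
          constructor
          · refine le_trans (Polynomial.natDegree_pow_le) ?_
            have : (Polynomial.X + 1 : Polynomial F).natDegree ≤ 1 := by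
              refine le_trans (Polynomial.natDegree_add_le _ _) ?_
              simp [Polynomial.natDegree_X]
            calc k * (Polynomial.X + 1 : Polynomial F).natDegree ≤ k * 1 :=
                  Nat.mul_le_mul_left _ this
              _ = k := by ring
          · refine le_trans (Polynomial.natDegree_add_le _ _) ?_
            simp [Polynomial.natDegree_X_pow]
        have h2 : (Fintype.card F : Cardinal) = Cardinal.mk F := by
          simp [Cardinal.mk_fintype]
        rw [← h2, hF]
        exact_mod_cast lt_of_le_of_lt h1 hklt
    have hc := congrArg (fun Q => Polynomial.coeff Q i) hPz
    simp only [hP, Polynomial.coeff_sub, Polynomial.coeff_add, Polynomial.coeff_X_pow,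
      Polynomial.coeff_zero, Polynomial.coeff_X_add_one_pow, Polynomial.coeff_one] at hc
    rw [if_neg hik.ne, if_neg hi0.ne'] at hc
    have : ((k.choose i : ℕ) : F) = 0 := by
      simpa using hc
    exact (CharP.cast_eq_zero_iff F p _).mp this
  -- Lucas argument
  set l := k.factorization p with hl
  set m := k / p ^ l with hm
  have hkm : p ^ l * m = k := Nat.ordProj_mul_ordCompl_eq_self k p
  have hpm : ¬ p ∣ m := Nat.not_dvd_ordCompl hp hk.ne'
  rcases eq_or_ne m 1 with h1 | h1
  · exact ⟨l, by rw [← hkm, h1, mul_one]⟩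
  · exfalso
    have hm0 : m ≠ 0 := by
      intro h0; rw [h0, mul_zero] at hkm; exact hk.ne' hkm.symm
    have hm2 : 2 ≤ m := by
      rcases Nat.lt_or_ge m 2 with h | h
      · interval_cases m <;> simp_all
      · exact h
    have hplpos : 0 < p ^ l := Nat.pow_pos hp.pos
    have hplk : p ^ l < k := by
      calc p ^ l = p ^ l * 1 := by ring
        _ < p ^ l * m := by gcongr; omega
        _ = k := hkm
    have hdvd := hbin (p ^ l) hplpos hplk
    have : ((k.choose (p ^ l) : ℕ) : ZMod p) = 0 := by
      exact_mod_cast (ZMod.natCast_eq_zero_iff _ _).mpr hdvd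
    rw [← hkm, lucasB] at this
    exact hpm ((ZMod.natCast_eq_zero_iff _ _).mp this)

lemma charF {F : Type*} [Field F] [Fintype F] {p n : ℕ} (hp : p.Prime) (hn : 0 < n)
    (hF : Fintype.card F = p ^ n) : CharP F p := by
  obtain ⟨c, hc⟩ := CharP.exists F
  haveI := hc
  obtain ⟨m, hcp, hm⟩ := FiniteField.card F c
  have hpc : p = c := by
    have h1 : p ∣ c ^ (m : ℕ) := by
      rw [← hm, hF]
      exact dvd_pow_self p hn.ne'
    have := hp.dvd_of_dvd_pow h1
    exact ((Nat.prime_dvd_prime_iff_eq hp hcp).mp this)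
  subst hpc
  exact hc

theorem stmt_2 (p n : ℕ) (hp : p.Prime) (hn : 0 < n)
    (F : Type*) [Field F] [Fintype F] (hF : Fintype.card F = p ^ n)
    (qi qj : ℕ) (hqi : 0 < qi) (hqj : 0 < qj)
    (hci : Nat.Coprime qi (p ^ n - 1)) (hcj : Nat.Coprime qj (p ^ n - 1)) :
    (∀ α β : F, (α ^ qi + β ^ qi) ^ qj = (α ^ qj + β ^ qj) ^ qi) ↔
      ∃ l < n, qi ≡ qj * p ^ l [MOD p ^ n - 1] := by
  haveI : Fact p.Prime := ⟨hp⟩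
  haveI : CharP F p := charF hp hn hF
  have hp1 : 1 < p := hp.one_lt
  have hpn1 : 1 < p ^ n := Nat.one_lt_pow hn.ne' hp1
  constructor
  · -- forward
    intro h
    by_cases hM1 : p ^ n - 1 = 1
    · exact ⟨0, hn, by rw [hM1]; exact Nat.modEq_one⟩
    · have hM2 : 2 ≤ p ^ n - 1 := by omega
      obtain ⟨qi', -, hqi'⟩ := Nat.exists_mul_mod_eq_one_of_coprime hci (by omega)
      have hqi'pos : 0 < qi' := by
        rcases Nat.eq_zero_or_pos qi' with rfl | h'
        · simp at hqi'
        · exact h'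
      have hmod1 : qi * qi' ≡ 1 [MOD p ^ n - 1] := by
        show _ % _ = _ % _
        rw [hqi', Nat.mod_eq_of_lt (by omega)]
      have hco : Nat.Coprime (qi * qi') (p ^ n - 1) := by
        have hd2 := Nat.gcd_dvd_right (qi * qi') (p ^ n - 1)
        have hd1 := Nat.gcd_dvd_left (qi * qi') (p ^ n - 1)
        have hh : Nat.gcd (qi * qi') (p ^ n - 1) ∣ qi * qi' % (p ^ n - 1) :=
          (Nat.dvd_mod_iff hd2).mpr hd1
        rw [hqi'] at hh
        exact Nat.dvd_one.mp hh
      have hcoqi' : Nat.Coprime qi' (p ^ n - 1) :=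
        Nat.Coprime.coprime_dvd_left (Dvd.intro_left qi rfl) hco
      set k := (qj * qi') % (p ^ n - 1) with hk
      have hkM : k < p ^ n - 1 := Nat.mod_lt _ (by omega)
      have hcok : Nat.Coprime k (p ^ n - 1) := by
        have hmm : Nat.Coprime (qj * qi') (p ^ n - 1) := Nat.Coprime.mul hcj hcoqi'
        have hmm2 := hmm.symm
        have hg : Nat.gcd (qj * qi' % (p ^ n - 1)) (p ^ n - 1) = 1 := by
          rw [← Nat.gcd_rec]; exact hmm2
        exact hg
      have hk0 : 0 < k := by
        rcases Nat.eq_zero_or_pos k with h0 | h'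
        · exfalso
          rw [h0] at hcok
          have : p ^ n - 1 = 1 := by simpa [Nat.Coprime] using hcok
          omega
        · exact h'
      have hmodk : qj * qi' ≡ k [MOD p ^ n - 1] := (Nat.mod_modEq _ _).symm
      have hadd : ∀ x y : F, (x + y) ^ k = x ^ k + y ^ k := by
        intro u v
        have h1 := h (u ^ qi') (v ^ qi')
        rw [← pow_mul, ← pow_mul, ← pow_mul, ← pow_mul] at h1
        have e1 : ∀ w : F, w ^ (qi' * qi) = w := fun w => by
          rw [powA hF (by positivity) one_pos (by rw [mul_comm]; exact hmod1) w, pow_one]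
        have e2 : ∀ w : F, w ^ (qi' * qj) = w ^ k := fun w =>
          powA hF (by positivity) hk0 (by rw [mul_comm]; exact hmodk) w
        rw [e1, e1, e2, e2] at h1
        have h2 := congrArg (fun z : F => z ^ qi') h1
        rw [← pow_mul, ← pow_mul] at h2
        rw [powA hF (by positivity) hk0 hmodk (u + v)] at h2
        rw [powA hF (by positivity) one_pos hmod1 (u ^ k + v ^ k), pow_one] at h2
        exact h2
      obtain ⟨l, hkl⟩ := addC hp hF hk0 (by omega) hadd
      have hln : l < n := by
        have hplt : p ^ l < p ^ n := by omega
        exact (Nat.pow_lt_pow_iff_right hp1).mp hplt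
      have hqj_cong : qj ≡ qi * p ^ l [MOD p ^ n - 1] := by
        calc qj = qj * 1 := (mul_one qj).symm
          _ ≡ qj * (qi * qi') [MOD p ^ n - 1] := (hmod1.symm).mul_left qj
          _ = qi * (qj * qi') := by ring
          _ ≡ qi * k [MOD p ^ n - 1] := hmodk.mul_left qi
          _ = qi * p ^ l := by rw [hkl]
      rcases Nat.eq_zero_or_pos l with rfl | hlpos
      · exact ⟨0, hn, by simpa using hqj_cong.symm⟩
      · refine ⟨n - l, by omega, ?_⟩
        have hpn_cong : p ^ n ≡ 1 [MOD p ^ n - 1] :=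
          ((Nat.modEq_iff_dvd' (by omega : 1 ≤ p ^ n)).mpr dvd_rfl).symm
        calc qi = qi * 1 := (mul_one qi).symm
          _ ≡ qi * p ^ n [MOD p ^ n - 1] := (hpn_cong.symm).mul_left qi
          _ = qi * p ^ l * p ^ (n - l) := by
              rw [mul_assoc, ← pow_add, Nat.add_sub_cancel' hln.le]
          _ ≡ qj * p ^ (n - l) [MOD p ^ n - 1] := (hqj_cong.symm).mul_right _
  · -- backward
    rintro ⟨l, hl, hmod⟩ α β
    have hqjpl : 0 < qj * p ^ l := by positivity
    have h1 : (α ^ qj + β ^ qj) ^ qi = (α ^ qj + β ^ qj) ^ (qj * p ^ l) :=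
      powA hF hqi hqjpl hmod _
    rw [h1, mul_comm qj (p ^ l), pow_mul, add_pow_char_pow, ← pow_mul, ← pow_mul,
      powA hF hqjpl hqi hmod.symm α, powA hF hqjpl hqi hmod.symm β]
end

section
/- Let F = GF(27) and define θ : F^4 → F^4 by θ(x₁,x₂,x₃,x₄) = (x₃, x₄, x₁^9, x₂^9). Then θ is an additive group automorphism of (F^4, +), and for all α ∈ F and all (x₁,x₂,x₃,x₄) ∈ F^4, θ(x₁α, x₂α, x₃α^5, x₄α^5) = (y₁β, y₂β, y₃β^7, y₄β^7), where (y₁,y₂,y₃,y₄) = θ(x₁,x₂,x₃,x₄) and β = α^5. -/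
theorem stmt_6 (F : Type*) [Field F] [Fintype F] (hF : Fintype.card F = 27)
    (θ : F × F × F × F → F × F × F × F)
    (hθ : ∀ x : F × F × F × F, θ x = (x.2.2.1, x.2.2.2, x.1 ^ 9, x.2.1 ^ 9)) :
    Function.Bijective θ ∧ (∀ x y : F × F × F × F, θ (x + y) = θ x + θ y) ∧
      ∀ (α x₁ x₂ x₃ x₄ : F),
        θ (x₁ * α, x₂ * α, x₃ * α ^ 5, x₄ * α ^ 5) =
          ((θ (x₁, x₂, x₃, x₄)).1 * α ^ 5,
           (θ (x₁, x₂, x₃, x₄)).2.1 * α ^ 5,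
           (θ (x₁, x₂, x₃, x₄)).2.2.1 * (α ^ 5) ^ 7,
           (θ (x₁, x₂, x₃, x₄)).2.2.2 * (α ^ 5) ^ 7) := by
  have h27 : ∀ a : F, a ^ 27 = a := fun a => hF ▸ FiniteField.pow_card a
  -- characteristic is 3
  obtain ⟨p, hpc⟩ := CharP.exists F
  haveI := hpc
  have hpp : p.Prime := CharP.char_is_prime F p
  haveI : Fact p.Prime := ⟨hpp⟩
  obtain ⟨n, hcard⟩ := FiniteField.card F p
  have hp3 : p = 3 := by
    have hdvd : p ∣ 27 := hF ▸ hcard.2 ▸ dvd_pow_self p n.ne_zero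
    have h3 : p ∣ 3 ^ 3 := by norm_num [hdvd]
    have : p ∣ 3 := hpp.dvd_of_dvd_pow h3
    exact (Nat.prime_dvd_prime_iff_eq hpp Nat.prime_three).mp this
  subst hp3
  have hadd : ∀ a b : F, (a + b) ^ 9 = a ^ 9 + b ^ 9 := by
    intro a b
    have : (a + b) ^ 3 ^ 2 = a ^ 3 ^ 2 + b ^ 3 ^ 2 := add_pow_char_pow a b 3 2
    norm_num at this
    exact this
  have h35 : ∀ a : F, a ^ 35 = a ^ 9 := by
    intro a
    calc a ^ 35 = a ^ 27 * a ^ 8 := by ring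
    _ = a * a ^ 8 := by rw [h27]
    _ = a ^ 9 := by ring
  refine ⟨?_, ?_, ?_⟩
  · have hinv : Function.LeftInverse
        (fun y : F × F × F × F => (y.2.2.1 ^ 3, y.2.2.2 ^ 3, y.1, y.2.1)) θ ∧
        Function.RightInverse
        (fun y : F × F × F × F => (y.2.2.1 ^ 3, y.2.2.2 ^ 3, y.1, y.2.1)) θ := by
      constructor <;> intro x <;> simp only [hθ, ← pow_mul]
      · exact Prod.ext (by simpa using h27 x.1) (Prod.ext (by simpa using h27 x.2.1) rfl)
      · exact Prod.ext rfl (Prod.ext rfl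
          (Prod.ext (by simpa using h27 x.2.2.1) (by simpa using h27 x.2.2.2)))
    exact ⟨hinv.1.injective, hinv.2.surjective⟩
  · intro x y
    simp only [hθ, Prod.fst_add, Prod.snd_add, Prod.mk_add_mk, hadd]
  · intro α x₁ x₂ x₃ x₄
    simp only [hθ]
    refine Prod.ext rfl (Prod.ext rfl (Prod.ext ?_ ?_)) <;> simp only [hadd]
    · calc (x₁ * α) ^ 9 = x₁ ^ 9 * α ^ 9 := mul_pow _ _ _
        _ = x₁ ^ 9 * α ^ 35 := by rw [h35]
        _ = x₁ ^ 9 * (α ^ 5) ^ 7 := by ring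
    · calc (x₂ * α) ^ 9 = x₂ ^ 9 * α ^ 9 := mul_pow _ _ _
        _ = x₂ ^ 9 * α ^ 35 := by rw [h35]
        _ = x₂ ^ 9 * (α ^ 5) ^ 7 := by ring
end

section
/- Let g, m, N be positive integers with N ≤ m, N ≤ g, and gcd(gcd(m, N), g) = 1. Then N divides the product of binomial coefficients C(g−1, N−1) · C(m−1, N−1). -/
private lemma aux_div (N g A : ℕ) (hN : 0 < N) (h : N ∣ g * A) :
    N / Nat.gcd N g ∣ A := by
  set a := Nat.gcd N g with ha
  have haN : a ∣ N := Nat.gcd_dvd_left N g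
  have hag : a ∣ g := Nat.gcd_dvd_right N g
  have hapos : 0 < a := Nat.gcd_pos_of_pos_left g hN
  have hcop : Nat.Coprime (N / a) (g / a) := Nat.coprime_div_gcd_div_gcd hapos
  obtain ⟨N', hN'⟩ := haN
  obtain ⟨g', hg'⟩ := hag
  have h2 : N' ∣ g' * A := by
    have : a * N' ∣ a * (g' * A) := by
      rw [← hN', ← mul_assoc, ← hg']; exact h
    exact (mul_dvd_mul_iff_left hapos.ne').mp this
  have hcop' : Nat.Coprime N' g' := by
    rwa [hN', hg', Nat.mul_div_cancel_left _ hapos, Nat.mul_div_cancel_left _ hapos] at hcop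
  have : N' ∣ A := (Nat.Coprime.dvd_of_dvd_mul_left hcop' h2)
  rwa [hN', Nat.mul_div_cancel_left _ hapos]

theorem stmt_12 (g m N : ℕ) (hg : 0 < g) (hm : 0 < m) (hN : 0 < N)
    (hNm : N ≤ m) (hNg : N ≤ g) (hgcd : Nat.gcd (Nat.gcd m N) g = 1) :
    N ∣ Nat.choose (g - 1) (N - 1) * Nat.choose (m - 1) (N - 1) := by
  set A := Nat.choose (g - 1) (N - 1)
  set B := Nat.choose (m - 1) (N - 1)
  -- N ∣ g * A
  have key : ∀ x : ℕ, 0 < x → N ≤ x → N ∣ x * Nat.choose (x - 1) (N - 1) := by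
    intro x hx _
    obtain ⟨x', rfl⟩ := Nat.exists_eq_succ_of_ne_zero hx.ne'
    obtain ⟨N', rfl⟩ := Nat.exists_eq_succ_of_ne_zero hN.ne'
    have := Nat.add_one_mul_choose_eq x' N'
    simp only [Nat.succ_sub_one]
    exact ⟨Nat.choose (x' + 1) (N' + 1), by rw [this, mul_comm]⟩
  have hA : N / Nat.gcd N g ∣ A := aux_div N g A hN (key g hg hNg)
  have hB : N / Nat.gcd N m ∣ B := aux_div N m B hN (key m hm hNm)
  set a := Nat.gcd N g with ha
  set b := Nat.gcd N m with hb
  have hcop : Nat.Coprime a b := by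
    have h1 : Nat.gcd a b ∣ Nat.gcd (Nat.gcd m N) g :=
      Nat.dvd_gcd
        (Nat.dvd_gcd ((Nat.gcd_dvd_right a b).trans (Nat.gcd_dvd_right N m))
          ((Nat.gcd_dvd_left a b).trans (Nat.gcd_dvd_left N g)))
        ((Nat.gcd_dvd_left a b).trans (Nat.gcd_dvd_right N g))
    rw [hgcd] at h1
    exact Nat.eq_one_of_dvd_one h1
  have haN : a ∣ N := Nat.gcd_dvd_left N g
  have hbN : b ∣ N := Nat.gcd_dvd_left N m
  have habN : a * b ∣ N := hcop.mul_dvd_of_dvd_of_dvd haN hbN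
  obtain ⟨k, hk⟩ := habN
  have hapos : 0 < a := Nat.gcd_pos_of_pos_left g hN
  have hbpos : 0 < b := Nat.gcd_pos_of_pos_left m hN
  have hNa : N / a = b * k := by rw [hk, mul_assoc, Nat.mul_div_cancel_left _ hapos]
  have hNb : N / b = a * k := by
    rw [hk, mul_comm a b, mul_assoc, Nat.mul_div_cancel_left _ hbpos]
  have hprod : N / a * (N / b) ∣ A * B := mul_dvd_mul hA hB
  have : N ∣ N / a * (N / b) := by
    rw [hNa, hNb, hk]
    exact ⟨k, by ring⟩
  exact this.trans hprod
end
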